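/- Let k ≥ 3 be an integer, let a be a real number with 0 < a < 4, and let α be a real number with 0 < α ≤ 2. Then the following three inequalities hold simultaneously: (i) (k−2)/(k−1) < α < 2/√(k−1), (ii) 0 < a ≤ 4 − (4(k−2))/((k−1)α), (iii) a < (4−(k−1)α²)/(k−α(k−1)); if and only if the following two conditions hold simultaneously: (iv) (4/(4−a))·(1/α) ≤ (k−1)/(k−2), and (v) the symmetric 3×3 real matrix G(a,α,k) with rows [1/k + α/k − α/k² + 1/a − 1, (α/2)(1 − 2/k), 1/2 − 1/a], [(α/2)(1 − 2/k), k/(k−1) − α, 0], [1/2 − 1/a, 0, 1/a] is positive definite. -/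

import Mathlib

open scoped Matrix

/-- The symmetric `3 × 3` matrix `G(a,α,k)` from the paper. -/
noncomputable def Gmat (a α : ℝ) (k : ℕ) : Matrix (Fin 3) (Fin 3) ℝ :=
  !![1 / (k : ℝ) + α / (k : ℝ) - α / (k : ℝ) ^ 2 + 1 / a - 1,
      (α / 2) * (1 - 2 / (k : ℝ)), 1 / 2 - 1 / a;
    (α / 2) * (1 - 2 / (k : ℝ)), (k : ℝ) / ((k : ℝ) - 1) - α, 0;
    1 / 2 - 1 / a, 0, 1 / a]

set_option maxHeartbeats 2000000 in
/-- For an integer `k ≥ 3` and reals `0 < a < 4`, `0 < α ≤ 2`, the three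
inequalities `(k−2)/(k−1) < α < 2/√(k−1)`, `0 < a ≤ 4 − 4(k−2)/((k−1)α)` and
`a < (4−(k−1)α²)/(k−α(k−1))` hold simultaneously if and only if
`(4/(4−a))·(1/α) ≤ (k−1)/(k−2)` and the matrix `G(a,α,k)` is positive definite. -/
theorem statement7 (k : ℕ) (hk : 3 ≤ k) (a α : ℝ)
    (ha0 : 0 < a) (ha4 : a < 4) (hα0 : 0 < α) (hα2 : α ≤ 2) :
    ((((k : ℝ) - 2) / ((k : ℝ) - 1) < α ∧ α < 2 / Real.sqrt ((k : ℝ) - 1)) ∧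
      (0 < a ∧ a ≤ 4 - (4 * ((k : ℝ) - 2)) / (((k : ℝ) - 1) * α)) ∧
      a < (4 - ((k : ℝ) - 1) * α ^ 2) / ((k : ℝ) - α * ((k : ℝ) - 1)))
    ↔
    ((4 / (4 - a)) * (1 / α) ≤ ((k : ℝ) - 1) / ((k : ℝ) - 2) ∧
      (Gmat a α k).PosDef) := by
  have hK3 : (3 : ℝ) ≤ (k : ℝ) := by exact_mod_cast hk
  set K : ℝ := (k : ℝ) with hKdef
  have hK0 : 0 < K := by linarith
  have hK1 : 0 < K - 1 := by linarith
  have hK2 : 0 < K - 2 := by linarith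
  have ha4' : 0 < 4 - a := by linarith
  have hane : a ≠ 0 := ne_of_gt ha0
  have hKne : K ≠ 0 := ne_of_gt hK0
  have hK1ne : K - 1 ≠ 0 := ne_of_gt hK1
  have hsqpos : 0 < Real.sqrt (K - 1) := Real.sqrt_pos.mpr hK1
  have hsqsq : Real.sqrt (K - 1) ^ 2 = K - 1 := Real.sq_sqrt hK1.le
  -- translation of the sqrt inequality
  have sqrt_iff : (α < 2 / Real.sqrt (K - 1)) ↔ α ^ 2 * (K - 1) < 4 := by
    rw [lt_div_iff₀ hsqpos]
    constructor
    · intro h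
      nlinarith [mul_pos hα0 hsqpos, hsqsq]
    · intro h
      nlinarith [mul_pos hα0 hsqpos, hsqsq]
  -- Hermitian part
  have hherm : (Gmat a α k).IsHermitian := by
    rw [Matrix.IsHermitian]
    ext i j
    fin_cases i <;> fin_cases j <;>
      simp [Gmat, Matrix.conjTranspose_apply, Matrix.vecHead, Matrix.vecTail]
  -- quadratic form value
  have hQval : ∀ x : Fin 3 → ℝ,
      star x ⬝ᵥ (Gmat a α k) *ᵥ x =
        (1 / K + α / K - α / K ^ 2 + 1 / a - 1) * (x 0) ^ 2
          + 2 * ((α / 2) * (1 - 2 / K)) * (x 0) * (x 1)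
          + 2 * (1 / 2 - 1 / a) * (x 0) * (x 2)
          + (K / (K - 1) - α) * (x 1) ^ 2 + (1 / a) * (x 2) ^ 2 := by
    intro x
    simp [Gmat, dotProduct, Matrix.mulVec, Fin.sum_univ_three, ← hKdef]
    ring
  -- determinant value
  have hdetval : (Gmat a α k).det =
      (4 - (K - 1) * α ^ 2 - a * (K - α * (K - 1))) / (4 * a * (K - 1)) := by
    simp [Gmat, Matrix.det_fin_three, ← hKdef]
    field_simp
    ring
  constructor
  · rintro ⟨⟨hαl, hαr⟩, ⟨-, ha2⟩, ha3⟩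
    have hα4 : α ^ 2 * (K - 1) < 4 := sqrt_iff.mp hαr
    have hs : 0 < K - α * (K - 1) := by
      nlinarith [mul_lt_mul_of_pos_right hα4 hK1, sq_nonneg (K - 2), mul_pos hα0 hK1]
    have he2 : 0 < 4 - (K - 1) * α ^ 2 - a * (K - α * (K - 1)) := by
      have := (lt_div_iff₀ hs).mp ha3
      linarith
    have he1 : 0 < 4 * (K + α * (K - 1)) - a * K ^ 2 := by
      have key : (4 * (K + α * (K - 1)) - a * K ^ 2) * (K - α * (K - 1))
          = K ^ 2 * (4 - (K - 1) * α ^ 2 - a * (K - α * (K - 1)))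
            + α ^ 2 * (K - 1) * (K - 2) ^ 2 := by ring
      have hpos : 0 < (4 * (K + α * (K - 1)) - a * K ^ 2) * (K - α * (K - 1)) := by
        rw [key]
        have h1 : 0 < K ^ 2 * (4 - (K - 1) * α ^ 2 - a * (K - α * (K - 1))) :=
          mul_pos (by positivity) he2
        nlinarith [mul_nonneg (mul_nonneg (sq_nonneg α) hK1.le) (sq_nonneg (K - 2))]
      by_contra hc
      push_neg at hc
      have : (4 * (K + α * (K - 1)) - a * K ^ 2) * (K - α * (K - 1)) ≤ 0 :=
        mul_nonpos_iff.mpr (Or.inr ⟨hc, hs.le⟩)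
      linarith
    refine ⟨?_, Matrix.posDef_iff_dotProduct_mulVec.mpr ⟨hherm, ?_⟩⟩
    · -- condition (iv)
      rw [div_mul_div_comm, div_le_div_iff₀ (by positivity) hK2]
      have h1 : 4 * (K - 2) / ((K - 1) * α) ≤ 4 - a := by linarith
      have h2 : 4 * (K - 2) ≤ (4 - a) * ((K - 1) * α) :=
        (div_le_iff₀ (by positivity)).mp h1
      nlinarith
    · intro x hx
      rw [hQval x]
      set u := x 0
      set v := x 1
      set w := x 2
      set Q := (1 / K + α / K - α / K ^ 2 + 1 / a - 1) * u ^ 2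
          + 2 * ((α / 2) * (1 - 2 / K)) * u * v
          + 2 * (1 / 2 - 1 / a) * u * w
          + (K / (K - 1) - α) * v ^ 2 + (1 / a) * w ^ 2 with hQdef
      have key : (16 * K ^ 2 * (K - 1) * a * (4 * (K + α * (K - 1)) - a * K ^ 2)) * Q
          = 16 * K ^ 2 * (K - 1) * (4 * (K + α * (K - 1)) - a * K ^ 2)
              * (w + (a - 2) / 2 * u) ^ 2
            + 4 * (K - 1) * a
              * ((4 * (K + α * (K - 1)) - a * K ^ 2) * u + 2 * K * α * (K - 2) * v) ^ 2
            + 16 * K ^ 4 * a * (4 - (K - 1) * α ^ 2 - a * (K - α * (K - 1))) * v ^ 2 := by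
        rw [hQdef]
        field_simp
        ring
      have hx' : u ≠ 0 ∨ v ≠ 0 ∨ w ≠ 0 := by
        by_contra h
        push_neg at h
        apply hx
        funext i
        fin_cases i
        · exact h.1
        · exact h.2.1
        · exact h.2.2
      have hrhs : 0 < 16 * K ^ 2 * (K - 1) * (4 * (K + α * (K - 1)) - a * K ^ 2)
              * (w + (a - 2) / 2 * u) ^ 2
            + 4 * (K - 1) * a
              * ((4 * (K + α * (K - 1)) - a * K ^ 2) * u + 2 * K * α * (K - 2) * v) ^ 2
            + 16 * K ^ 4 * a * (4 - (K - 1) * α ^ 2 - a * (K - α * (K - 1))) * v ^ 2 := by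
        have t1 : 0 ≤ 16 * K ^ 2 * (K - 1) * (4 * (K + α * (K - 1)) - a * K ^ 2)
            * (w + (a - 2) / 2 * u) ^ 2 := by positivity
        have t2 : 0 ≤ 4 * (K - 1) * a
            * ((4 * (K + α * (K - 1)) - a * K ^ 2) * u + 2 * K * α * (K - 2) * v) ^ 2 := by
          positivity
        have t3 : 0 ≤ 16 * K ^ 4 * a * (4 - (K - 1) * α ^ 2 - a * (K - α * (K - 1)))
            * v ^ 2 := by positivity
        rcases hx' with hu | hv | hw
        · rcases eq_or_ne v 0 with hv0 | hv0
          · have : 0 < 4 * (K - 1) * a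
                * ((4 * (K + α * (K - 1)) - a * K ^ 2) * u + 2 * K * α * (K - 2) * v) ^ 2 := by
              have : (4 * (K + α * (K - 1)) - a * K ^ 2) * u + 2 * K * α * (K - 2) * v ≠ 0 := by
                rw [hv0]
                simpa using mul_ne_zero (ne_of_gt he1) hu
              positivity
            linarith
          · have : 0 < 16 * K ^ 4 * a * (4 - (K - 1) * α ^ 2 - a * (K - α * (K - 1)))
                * v ^ 2 := by positivity
            linarith
        · have : 0 < 16 * K ^ 4 * a * (4 - (K - 1) * α ^ 2 - a * (K - α * (K - 1)))
              * v ^ 2 := by positivity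
          linarith
        · rcases eq_or_ne v 0 with hv0 | hv0
          · rcases eq_or_ne u 0 with hu0 | hu0
            · have : w + (a - 2) / 2 * u ≠ 0 := by
                rw [hu0]; simpa using hw
              have : 0 < 16 * K ^ 2 * (K - 1) * (4 * (K + α * (K - 1)) - a * K ^ 2)
                  * (w + (a - 2) / 2 * u) ^ 2 := by positivity
              linarith
            · have : 0 < 4 * (K - 1) * a
                  * ((4 * (K + α * (K - 1)) - a * K ^ 2) * u + 2 * K * α * (K - 2) * v) ^ 2 := by
                have : (4 * (K + α * (K - 1)) - a * K ^ 2) * u + 2 * K * α * (K - 2) * v ≠ 0 := by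
                  rw [hv0]
                  simpa using mul_ne_zero (ne_of_gt he1) hu0
                positivity
              linarith
          · have : 0 < 16 * K ^ 4 * a * (4 - (K - 1) * α ^ 2 - a * (K - α * (K - 1)))
                * v ^ 2 := by positivity
            linarith
      have hC : 0 < 16 * K ^ 2 * (K - 1) * a * (4 * (K + α * (K - 1)) - a * K ^ 2) :=
        mul_pos (mul_pos (mul_pos (by positivity) hK1) ha0) he1
      have hCQ : 0 < (16 * K ^ 2 * (K - 1) * a * (4 * (K + α * (K - 1)) - a * K ^ 2)) * Q := by
        rw [key]; exact hrhs
      exact (mul_pos_iff_of_pos_left hC).mp hCQ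
  · rintro ⟨hiv, hPD⟩
    obtain ⟨hherm', hQ⟩ := Matrix.posDef_iff_dotProduct_mulVec.mp hPD
    -- G22 > 0
    have hG22 : 0 < K / (K - 1) - α := by
      have hne : (![0, 1, 0] : Fin 3 → ℝ) ≠ 0 := by
        intro h; have := congrFun h 1; norm_num at this
      have h := hQ (x := ![0, 1, 0]) hne
      have hval : star (![0, 1, 0] : Fin 3 → ℝ) ⬝ᵥ Gmat a α k *ᵥ ![0, 1, 0]
          = K / (K - 1) - α := by
        simp [Gmat, dotProduct, Matrix.mulVec, Fin.sum_univ_three, ← hKdef]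
      rw [hval] at h
      exact h
    have hs : 0 < K - α * (K - 1) := by
      have := (lt_div_iff₀ hK1).mp (by linarith : α < K / (K - 1))
      linarith
    -- e1 > 0
    have he1 : 0 < 4 * (K + α * (K - 1)) - a * K ^ 2 := by
      have hne : (![1, 0, -(a - 2) / 2] : Fin 3 → ℝ) ≠ 0 := by
        intro h; have := congrFun h 0; norm_num at this
      have h := hQ (x := ![1, 0, -(a - 2) / 2]) hne
      have hval : star (![1, 0, -(a - 2) / 2] : Fin 3 → ℝ) ⬝ᵥ
            Gmat a α k *ᵥ ![1, 0, -(a - 2) / 2]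
          = (4 * (K + α * (K - 1)) - a * K ^ 2) / (4 * K ^ 2) := by
        simp [Gmat, dotProduct, Matrix.mulVec, Fin.sum_univ_three, ← hKdef]
        field_simp
        ring
      rw [hval] at h
      have h4 : (0:ℝ) < 4 * K ^ 2 := by positivity
      have := (lt_div_iff₀ h4).mp h
      linarith
    -- e2 > 0 from the determinant
    have hdetpos : 0 < (Gmat a α k).det := Matrix.PosDef.det_pos hPD
    have he2 : 0 < 4 - (K - 1) * α ^ 2 - a * (K - α * (K - 1)) := by
      rw [hdetval] at hdetpos
      have h4 : (0:ℝ) < 4 * a * (K - 1) := by positivity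
      have := (lt_div_iff₀ h4).mp hdetpos
      linarith
    -- condition (iv) in cleared form
    have hiv' : 4 * (K - 2) ≤ (K - 1) * ((4 - a) * α) := by
      rw [div_mul_div_comm, div_le_div_iff₀ (by positivity) hK2] at hiv
      linarith
    refine ⟨⟨?_, ?_⟩, ⟨ha0, ?_⟩, ?_⟩
    · rw [div_lt_iff₀ hK1]
      nlinarith [mul_pos (mul_pos hK1 ha0) hα0]
    · rw [sqrt_iff]
      nlinarith [mul_pos ha0 hs]
    · rw [le_sub_iff_add_le, ← sub_nonneg]
      have : 4 * (K - 2) / ((K - 1) * α) ≤ 4 - a := by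
        rw [div_le_iff₀ (by positivity)]
        nlinarith
      linarith
    · rw [lt_div_iff₀ hs]
      nlinarith
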